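/- Let $R_n$ be the algebra of symmetric polynomials $r(t_1,\dots,t_n)$ over $\mathbb{C}$ with the property that after the substitution $t_i = s$, $t_j = -s$ (for any pair $i \ne j$) the result is independent of $s$. Suppose strict partitions $\lambda \ne \mu$ of length $\le n$ (padded with zeros) satisfy $r(\lambda) = r(\mu)$ for all $r \in R_n$. Then $\lambda = \mu$; i.e., the evaluation maps $r \mapsto r(\lambda)$ for distinct strict partitions $\lambda$ of length $\le n$ are pairwise distinct characters of $R_n$. -/

import Mathlib

open MvPolynomial


lemma aux_growth (c a : ℕ) : ∃ k : ℕ, c * a ^ (2*k+1) < (a+1) ^ (2*k+1) := by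
  rcases Nat.eq_zero_or_pos a with rfl | ha
  · exact ⟨0, by simp⟩
  · refine ⟨c * a, ?_⟩
    set e := 2 * (c * a) + 1 with he
    have ha' : (0:ℝ) < a := by exact_mod_cast ha
    have h2 : (-2 : ℝ) ≤ 1/a := by
      have : (0:ℝ) ≤ 1/(a:ℝ) := by positivity
      linarith
    have hb : (1 + (e:ℝ) * (1/a)) ≤ (1 + 1/a) ^ e := one_add_mul_le_pow h2 e
    have key : ((a:ℝ)+1)^e = (1+1/a)^e * (a:ℝ)^e := by
      rw [← mul_pow]; congr 1; field_simp
    have h3 : (1 + (e:ℝ)*(1/a)) * (a:ℝ)^e ≤ ((a:ℝ)+1)^e := by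
      rw [key]; exact mul_le_mul_of_nonneg_right hb (pow_nonneg ha'.le e)
    have h4 : (c:ℝ) * (a:ℝ)^e < (1 + (e:ℝ)*(1/a)) * (a:ℝ)^e := by
      apply mul_lt_mul_of_pos_right _ (pow_pos ha' e)
      rw [mul_one_div]
      have h5 : ((c:ℝ)-1) * a < e := by push_cast [he]; nlinarith
      have := (lt_div_iff₀ ha').mpr h5
      linarith
    have : (c:ℝ) * (a:ℝ)^e < ((a:ℝ)+1)^e := lt_of_lt_of_le h4 h3
    exact_mod_cast this

lemma aux_dom (S T : Finset ℕ) (M : ℕ) (hMpos : 0 < M) (hMS : M ∈ S)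
    (hT : ∀ x ∈ T, x < M)
    (hsum : ∀ k : ℕ, ∑ x ∈ S, x ^ (2*k+1) = ∑ x ∈ T, x ^ (2*k+1)) : False := by
  obtain ⟨a, rfl⟩ : ∃ a, M = a + 1 := ⟨M - 1, (Nat.succ_pred_eq_of_pos hMpos).symm⟩
  obtain ⟨k, hk⟩ := aux_growth T.card a
  have h1 : (a+1) ^ (2*k+1) ≤ ∑ x ∈ S, x ^ (2*k+1) :=
    Finset.single_le_sum (f := fun x => x ^ (2*k+1)) (fun x _ => Nat.zero_le _) hMS
  have h2 : ∑ x ∈ T, x ^ (2*k+1) ≤ T.card * a ^ (2*k+1) := by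
    calc ∑ x ∈ T, x ^ (2*k+1) ≤ ∑ _x ∈ T, a ^ (2*k+1) :=
          Finset.sum_le_sum (fun x hx => Nat.pow_le_pow_left (by have := hT x hx; omega) _)
      _ = T.card * a ^ (2*k+1) := by rw [Finset.sum_const, smul_eq_mul]
  have h3 := hsum k
  omega

lemma aux_rigid : ∀ (N : ℕ) (S T : Finset ℕ), S.card ≤ N → 0 ∉ S → 0 ∉ T →
    (∀ k : ℕ, ∑ x ∈ S, x ^ (2*k+1) = ∑ x ∈ T, x ^ (2*k+1)) → S = T := by
  intro N
  induction N with
  | zero =>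
    intro S T hcard hS hT hsum
    have hSe : S = ∅ := Finset.card_eq_zero.mp (Nat.le_zero.mp hcard)
    subst hSe
    by_contra hne
    obtain ⟨x, hx⟩ := Finset.nonempty_iff_ne_empty.mpr (fun hh => hne hh.symm)
    have h0 := hsum 0
    simp only [Finset.sum_empty] at h0
    have hxpos : 0 < x := Nat.pos_of_ne_zero (fun hh => hT (hh ▸ hx))
    have : 0 < ∑ y ∈ T, y ^ (2*0+1) :=
      lt_of_lt_of_le (by simpa using hxpos)
        (Finset.single_le_sum (f := fun y => y ^ (2*0+1)) (fun y _ => Nat.zero_le _) hx)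
    omega
  | succ N ih =>
    intro S T hcard hS hT hsum
    rcases Finset.eq_empty_or_nonempty S with rfl | hSne
    · -- same as base case
      by_contra hne
      obtain ⟨x, hx⟩ := Finset.nonempty_iff_ne_empty.mpr (fun hh => hne hh.symm)
      have h0 := hsum 0
      simp only [Finset.sum_empty] at h0
      have hxpos : 0 < x := Nat.pos_of_ne_zero (fun hh => hT (hh ▸ hx))
      have : 0 < ∑ y ∈ T, y ^ (2*0+1) :=
        lt_of_lt_of_le (by simpa using hxpos)
          (Finset.single_le_sum (f := fun y => y ^ (2*0+1)) (fun y _ => Nat.zero_le _) hx)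
      omega
    · have hTne : T.Nonempty := by
        by_contra hTe
        rw [Finset.not_nonempty_iff_eq_empty] at hTe
        subst hTe
        obtain ⟨x, hx⟩ := hSne
        have h0 := hsum 0
        simp only [Finset.sum_empty] at h0
        have hxpos : 0 < x := Nat.pos_of_ne_zero (fun hh => hS (hh ▸ hx))
        have : 0 < ∑ y ∈ S, y ^ (2*0+1) :=
          lt_of_lt_of_le (by simpa using hxpos)
            (Finset.single_le_sum (f := fun y => y ^ (2*0+1)) (fun y _ => Nat.zero_le _) hx)
        omega
      set M := max (S.max' hSne) (T.max' hTne) with hM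
      have hMpos : 0 < M := by
        have hx := S.max'_mem hSne
        have : 0 < S.max' hSne := Nat.pos_of_ne_zero (fun hh => hS (hh ▸ hx))
        omega
      have hMS : M ∈ S := by
        by_contra hMnot
        have hMT : M ∈ T := by
          rcases le_total (S.max' hSne) (T.max' hTne) with hh | hh
          · rw [hM, max_eq_right hh]; exact T.max'_mem hTne
          · exact absurd (by rw [hM, max_eq_left hh]; exact S.max'_mem hSne) hMnot
        refine aux_dom T S M hMpos hMT (fun x hx => ?_) (fun k => (hsum k).symm)
        have h1 : x ≤ M := le_trans (S.le_max' x hx) (le_max_left _ _)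
        exact lt_of_le_of_ne h1 (fun hh => hMnot (hh ▸ hx))
      have hMT : M ∈ T := by
        by_contra hMnot
        refine aux_dom S T M hMpos hMS (fun x hx => ?_) hsum
        have h1 : x ≤ M := le_trans (T.le_max' x hx) (le_max_right _ _)
        exact lt_of_le_of_ne h1 (fun hh => hMnot (hh ▸ hx))
      have herase : S.erase M = T.erase M := by
        apply ih
        · have := Finset.card_erase_of_mem hMS; omega
        · exact fun hh => hS (Finset.mem_of_mem_erase hh)
        · exact fun hh => hT (Finset.mem_of_mem_erase hh)
        · intro k
          have hs := Finset.add_sum_erase S (fun x => x ^ (2*k+1)) hMS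
          have ht := Finset.add_sum_erase T (fun x => x ^ (2*k+1)) hMT
          have h3 := hsum k
          beta_reduce at hs ht
          omega
      calc S = insert M (S.erase M) := (Finset.insert_erase hMS).symm
        _ = insert M (T.erase M) := by rw [herase]
        _ = T := Finset.insert_erase hMT



-- sup characterization of a strict-partition-like function
lemma aux_char (n : ℕ) (f : Fin n → ℕ) (hf : ∀ i j : Fin n, i < j → f j < f i ∨ f j = 0)
    (i : Fin n) :
    f i = (((Finset.univ.filter (fun l : Fin n => f l ≠ 0)).image f).filter
      (fun x => ∀ j : Fin n, j < i → x ≠ f j)).sup id := by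
  have hanti : ∀ j : Fin n, i ≤ j → f j ≤ f i := by
    intro j hij
    rcases eq_or_lt_of_le hij with rfl | hlt
    · exact le_refl _
    · rcases hf i j hlt with hh | hh
      · exact hh.le
      · omega
  apply le_antisymm
  · -- f i ≤ sup
    rcases Nat.eq_zero_or_pos (f i) with hz | hpos
    · omega
    · apply Finset.le_sup (f := id) (b := f i)
      rw [Finset.mem_filter]
      constructor
      · exact Finset.mem_image.mpr ⟨i, Finset.mem_filter.mpr ⟨Finset.mem_univ i, by omega⟩, rfl⟩
      · intro j hj hne
        rcases hf j i hj with hh | hh <;> omega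
  · -- sup ≤ f i
    apply Finset.sup_le
    intro x hx
    rw [Finset.mem_filter] at hx
    obtain ⟨hx1, hx2⟩ := hx
    obtain ⟨l, hl, rfl⟩ := Finset.mem_image.mp hx1
    rw [Finset.mem_filter] at hl
    rcases lt_or_ge l i with hli | hli
    · exact absurd rfl (hx2 l hli)
    · exact hanti l hli




-- sum over image set equals full power sum
lemma aux_sum_image (n : ℕ) (f : Fin n → ℕ) (hf : ∀ i j : Fin n, i < j → f j < f i ∨ f j = 0)
    (e : ℕ) (he : e ≠ 0) :
    ∑ x ∈ (Finset.univ.filter (fun l : Fin n => f l ≠ 0)).image f, x ^ e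
      = ∑ i : Fin n, f i ^ e := by
  rw [Finset.sum_image]
  · apply Finset.sum_subset (Finset.filter_subset _ _)
    intro i _ hi
    rw [Finset.mem_filter, not_and, not_not] at hi
    rw [hi (Finset.mem_univ i), Nat.zero_pow (by omega)]
  · intro a ha b hb hab
    rw [Finset.mem_coe, Finset.mem_filter] at ha hb
    by_contra hne
    rcases lt_or_gt_of_ne hne with hh | hh
    · rcases hf a b hh with h1 | h1 <;> omega
    · rcases hf b a hh with h1 | h1 <;> omega

theorem stmt4 (n : ℕ) (lam mu : Fin n → ℕ)
    (hlam : ∀ i j : Fin n, i < j → lam j < lam i ∨ lam j = 0)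
    (hmu : ∀ i j : Fin n, i < j → mu j < mu i ∨ mu j = 0)
    (h : ∀ r : MvPolynomial (Fin n) ℂ, r.IsSymmetric →
      (∀ i j : Fin n, i ≠ j → ∀ (v : Fin n → ℂ) (s s' : ℂ),
        MvPolynomial.eval (Function.update (Function.update v i s) j (-s)) r
          = MvPolynomial.eval (Function.update (Function.update v i s') j (-s')) r) →
      MvPolynomial.eval (fun i => (lam i : ℂ)) r
        = MvPolynomial.eval (fun i => (mu i : ℂ)) r) :
    lam = mu := by
  -- step 1: equal odd power sums over ℕ
  have hpow : ∀ k : ℕ, ∑ i : Fin n, lam i ^ (2*k+1) = ∑ i : Fin n, mu i ^ (2*k+1) := by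
    intro k
    have hsub : ∀ i j : Fin n, i ≠ j → ∀ (v : Fin n → ℂ) (s s' : ℂ),
        MvPolynomial.eval (Function.update (Function.update v i s) j (-s)) (psum (Fin n) ℂ (2*k+1))
          = MvPolynomial.eval (Function.update (Function.update v i s') j (-s')) (psum (Fin n) ℂ (2*k+1)) := by
      intro i j hij v s s'
      have key : ∀ t : ℂ, MvPolynomial.eval (Function.update (Function.update v i t) j (-t)) (psum (Fin n) ℂ (2*k+1))
          = ∑ l ∈ (Finset.univ.erase j).erase i, v l ^ (2*k+1) := by
        intro t
        have he : ∀ w : Fin n → ℂ, MvPolynomial.eval w (psum (Fin n) ℂ (2*k+1)) = ∑ l, w l ^ (2*k+1) := by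
          intro w; simp [psum]
        rw [he]
        rw [← Finset.add_sum_erase _ _ (Finset.mem_univ j)]
        have hi : i ∈ Finset.univ.erase j := Finset.mem_erase.mpr ⟨hij, Finset.mem_univ i⟩
        rw [← Finset.add_sum_erase _ _ hi]
        have h1 : Function.update (Function.update v i t) j (-t) j = -t := Function.update_self _ _ _
        have h2 : Function.update (Function.update v i t) j (-t) i = t := by
          rw [Function.update_of_ne hij, Function.update_self]
        have h3 : ∑ l ∈ (Finset.univ.erase j).erase i, Function.update (Function.update v i t) j (-t) l ^ (2*k+1)
            = ∑ l ∈ (Finset.univ.erase j).erase i, v l ^ (2*k+1) := by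
          apply Finset.sum_congr rfl
          intro l hl
          rw [Finset.mem_erase] at hl
          obtain ⟨hli, hlj⟩ := hl
          rw [Function.update_of_ne (Finset.mem_erase.mp hlj).1, Function.update_of_ne hli]
        rw [h1, h2, h3]
        have hodd : (-t) ^ (2*k+1) = -(t ^ (2*k+1)) := Odd.neg_pow ⟨k, by ring⟩ t
        rw [hodd]; ring
      rw [key s, key s']
    have hc := h (psum (Fin n) ℂ (2*k+1)) (psum_isSymmetric (Fin n) ℂ (2*k+1)) hsub
    simp only [psum, map_sum, map_pow, eval_X] at hc
    have hc' : ((∑ i : Fin n, lam i ^ (2*k+1) : ℕ) : ℂ) = ((∑ i : Fin n, mu i ^ (2*k+1) : ℕ) : ℂ) := by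
      push_cast
      exact hc
    exact_mod_cast hc'
  -- step 2: image sets agree
  set Sl := (Finset.univ.filter (fun l : Fin n => lam l ≠ 0)).image lam with hSl
  set Sm := (Finset.univ.filter (fun l : Fin n => mu l ≠ 0)).image mu with hSm
  have hset : Sl = Sm := by
    apply aux_rigid Sl.card Sl Sm (le_refl _)
    · intro hh
      obtain ⟨i, hi, hzero⟩ := Finset.mem_image.mp hh
      rw [Finset.mem_filter] at hi
      omega
    · intro hh
      obtain ⟨i, hi, hzero⟩ := Finset.mem_image.mp hh
      rw [Finset.mem_filter] at hi
      omega
    · intro k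
      rw [hSl, hSm, aux_sum_image n lam hlam _ (by omega), aux_sum_image n mu hmu _ (by omega)]
      exact hpow k
  -- step 3: conclude by strong induction on index
  have hind : ∀ m : ℕ, ∀ i : Fin n, i.1 < m → lam i = mu i := by
    intro m
    induction m with
    | zero => omega
    | succ m ih =>
      intro i hi
      rcases Nat.lt_or_ge i.1 m with hlt | hge
      · exact ih i hlt
      · have hieq : ∀ j : Fin n, j < i → lam j = mu j := fun j hj => ih j (by omega)
        rw [aux_char n lam hlam i, aux_char n mu hmu i, ← hSl, ← hSm, hset]
        congr 1
        apply Finset.filter_congr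
        intro x _
        constructor
        · intro hh j hj; rw [← hieq j hj]; exact hh j hj
        · intro hh j hj; rw [hieq j hj]; exact hh j hj
  funext i
  exact hind (i.1 + 1) i (by omega)
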